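/- arXiv:1911.12160 — 3 statements merged into one kernel-verified Lean document; each statement's English description precedes it below -/
import Mathlib

section
/- Fix α > 0 and define f(v) = α√(1+αv) + v^{-α/2}√(1+αv) for v > 0. Then f is strictly decreasing on (0,1) and strictly increasing on (1,∞); in particular f(v) > f(1) for all v > 0 with v ≠ 1. -/
open Real Set

private lemma stmt_3_aux (α v p r : ℝ) (hv : v ≠ 0) (hr2 : r * r = 1 + α * v) :
    α * (1 / (2 * r) * α) + (-(α / 2) * (p / v) * r + p * (1 / (2 * r) * α))
      = α / (2 * r * v) * (α * v * (1 - p) + p * (v - 1)) := by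
  rcases eq_or_ne r 0 with h | h
  · simp [h]
  field_simp
  linear_combination (-(α * p)) * hr2

/-- For fixed `α > 0`, `f(v) = α√(1+αv) + v^(-α/2)√(1+αv)` is strictly decreasing
on `(0,1)`, strictly increasing on `(1,∞)`, and `f(v) > f(1)` for `v > 0`, `v ≠ 1`. -/
theorem stmt_3 (α : ℝ) (hα : 0 < α)
    (f : ℝ → ℝ)
    (hf : ∀ v, f v = α * Real.sqrt (1 + α * v) + v ^ (-(α / 2)) * Real.sqrt (1 + α * v)) :
    StrictAntiOn f (Set.Ioo (0 : ℝ) 1) ∧ StrictMonoOn f (Set.Ioi (1 : ℝ)) ∧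
      ∀ v : ℝ, 0 < v → v ≠ 1 → f 1 < f v := by
  have hfe : f = fun v => α * Real.sqrt (1 + α * v) + v ^ (-(α / 2)) * Real.sqrt (1 + α * v) :=
    funext hf
  subst hfe
  set f : ℝ → ℝ := fun v => α * Real.sqrt (1 + α * v) + v ^ (-(α / 2)) * Real.sqrt (1 + α * v)
    with hfdef
  -- derivative at v > 0
  have key : ∀ v : ℝ, 0 < v → HasDerivAt f
      (α * (1 / (2 * Real.sqrt (1 + α * v)) * α)
        + ((-(α / 2) * v ^ (-(α / 2) - 1)) * Real.sqrt (1 + α * v)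
          + v ^ (-(α / 2)) * (1 / (2 * Real.sqrt (1 + α * v)) * α))) v := by
    intro v hv
    have hs : 0 < 1 + α * v := by positivity
    have h1 : HasDerivAt (fun v : ℝ => 1 + α * v) α v := by
      simpa using ((hasDerivAt_id v).const_mul α).const_add 1
    have hsqrt : HasDerivAt (fun v : ℝ => Real.sqrt (1 + α * v))
        (1 / (2 * Real.sqrt (1 + α * v)) * α) v :=
      (Real.hasDerivAt_sqrt hs.ne').comp v h1
    have hr : HasDerivAt (fun v : ℝ => v ^ (-(α / 2)))
        (-(α / 2) * v ^ (-(α / 2) - 1)) v :=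
      Real.hasDerivAt_rpow_const (Or.inl hv.ne')
    exact (hsqrt.const_mul α).add (hr.mul hsqrt)
  -- rewriting the derivative
  have sign : ∀ v : ℝ, 0 < v →
      (α * (1 / (2 * Real.sqrt (1 + α * v)) * α)
        + ((-(α / 2) * v ^ (-(α / 2) - 1)) * Real.sqrt (1 + α * v)
          + v ^ (-(α / 2)) * (1 / (2 * Real.sqrt (1 + α * v)) * α)))
      = α / (2 * Real.sqrt (1 + α * v) * v) *
          (α * v * (1 - v ^ (-(α / 2))) + v ^ (-(α / 2)) * (v - 1)) := by
    intro v hv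
    have hs : 0 < 1 + α * v := by positivity
    have hr2 : Real.sqrt (1 + α * v) * Real.sqrt (1 + α * v) = 1 + α * v :=
      Real.mul_self_sqrt hs.le
    rw [Real.rpow_sub_one hv.ne']
    exact stmt_3_aux α v _ _ hv.ne' hr2
  -- continuity on (0, ∞)
  have hcont : ∀ v : ℝ, 0 < v → ContinuousAt f v := fun v hv =>
    (key v hv).differentiableAt.continuousAt
  have hA : StrictAntiOn f (Set.Ioc (0:ℝ) 1) := by
    apply strictAntiOn_of_deriv_neg (convex_Ioc 0 1)
    · intro v hv; exact (hcont v hv.1).continuousWithinAt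
    · intro v hv
      rw [interior_Ioc] at hv
      rw [(key v hv.1).deriv, sign v hv.1]
      have hp : 1 < v ^ (-(α / 2)) := by
        rw [Real.one_lt_rpow_iff_of_pos hv.1]
        right; exact ⟨hv.2, by linarith⟩
      have hαv : 0 < α * v := mul_pos hα hv.1
      have hr : 0 < Real.sqrt (1 + α * v) := Real.sqrt_pos.mpr (by linarith)
      apply mul_neg_of_pos_of_neg
      · exact div_pos hα (mul_pos (mul_pos two_pos hr) hv.1)
      · nlinarith [mul_pos (mul_pos hα hv.1) (sub_pos.2 hp),
          mul_pos (zero_lt_one.trans hp) (sub_pos.2 hv.2)]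
  have hB : StrictMonoOn f (Set.Ici (1:ℝ)) := by
    apply strictMonoOn_of_deriv_pos (convex_Ici 1)
    · intro v hv
      have : (0:ℝ) < v := lt_of_lt_of_le zero_lt_one (mem_Ici.mp hv)
      exact (hcont v this).continuousWithinAt
    · intro v hv
      rw [interior_Ici] at hv
      have hv1 : (1:ℝ) < v := hv
      have hv0 : (0:ℝ) < v := by linarith
      rw [(key v hv0).deriv, sign v hv0]
      have hp : v ^ (-(α / 2)) < 1 :=
        Real.rpow_lt_one_of_one_lt_of_neg hv1 (by linarith)
      have hp0 : 0 < v ^ (-(α / 2)) := Real.rpow_pos_of_pos hv0 _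
      have hαv : 0 < α * v := mul_pos hα hv0
      have hr : 0 < Real.sqrt (1 + α * v) := Real.sqrt_pos.mpr (by linarith)
      apply mul_pos
      · exact div_pos hα (mul_pos (mul_pos two_pos hr) hv0)
      · nlinarith [mul_pos (mul_pos hα hv0) (sub_pos.2 hp),
          mul_pos hp0 (sub_pos.2 hv1)]
  refine ⟨hA.mono (fun x hx => ⟨hx.1, hx.2.le⟩), hB.mono (fun x hx => mem_Ici.mpr (le_of_lt (mem_Ioi.mp hx))), ?_⟩
  intro v hv hne
  rcases lt_or_gt_of_ne hne with h | h
  · exact hA ⟨hv, h.le⟩ ⟨zero_lt_one, le_refl 1⟩ h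
  · exact hB (mem_Ici.mpr (le_refl 1)) (mem_Ici.mpr h.le) h
end

section
/- For α ≥ 0 and two probability densities f₁, f₂ on a measure space, the density power divergence d_α(f₁,f₂) = ∫ [f₂^{1+α} − (1 + 1/α) f₂^α f₁ + (1/α) f₁^{1+α}] dμ (for α > 0) is nonnegative, and equals zero if f₁ = f₂ almost everywhere. -/
open MeasureTheory

lemma ptwise_nonneg (α : ℝ) (hα : 0 < α) (a b : ℝ) (ha : 0 ≤ a) (hb : 0 ≤ b) :
    0 ≤ b ^ (1 + α) - (1 + 1 / α) * b ^ α * a + (1 / α) * a ^ (1 + α) := by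
  have h1α : (0:ℝ) < 1 + α := by linarith
  have hpq : ((1 + α) / α).HolderConjugate (1 + α) := by
    rw [Real.holderConjugate_iff]
    constructor
    · rw [lt_div_iff₀ hα]; linarith
    · field_simp; ring
  have hy := Real.young_inequality_of_nonneg (Real.rpow_nonneg hb α) ha hpq
  have hxp : (b ^ α) ^ ((1 + α) / α) = b ^ (1 + α) := by
    rw [← Real.rpow_mul hb]
    congr 1
    field_simp
  rw [hxp] at hy
  have : (1 + 1/α) * (b ^ α * a) ≤ (1 + 1/α) * (b ^ (1+α) / ((1+α)/α) + a ^ (1+α) / (1+α)) :=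
    mul_le_mul_of_nonneg_left hy (by positivity)
  have heq : (1 + 1/α) * (b ^ (1+α) / ((1+α)/α) + a ^ (1+α) / (1+α))
      = b ^ (1+α) + (1/α) * a ^ (1+α) := by
    field_simp
    ring
  rw [heq] at this
  nlinarith [this]

/-- For `α > 0` and probability densities `f₁, f₂` on a σ-finite measure space, the
density power divergence `∫ [f₂^{1+α} − (1+1/α) f₂^α f₁ + (1/α) f₁^{1+α}] dμ` is
nonnegative, and it equals zero if `f₁ = f₂` almost everywhere. -/
theorem stmt_6 {X : Type*} [MeasurableSpace X] (μ : Measure X) [SigmaFinite μ]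
    (α : ℝ) (hα : 0 < α) (f₁ f₂ : X → ℝ)
    (hf₁m : Measurable f₁) (hf₂m : Measurable f₂)
    (hf₁ : ∀ x, 0 ≤ f₁ x) (hf₂ : ∀ x, 0 ≤ f₂ x)
    (hint₁ : ∫ x, f₁ x ∂μ = 1) (hint₂ : ∫ x, f₂ x ∂μ = 1) :
    0 ≤ ∫ x, (f₂ x ^ (1 + α) - (1 + 1 / α) * f₂ x ^ α * f₁ x + (1 / α) * f₁ x ^ (1 + α)) ∂μ ∧
      (f₁ =ᵐ[μ] f₂ →
        ∫ x, (f₂ x ^ (1 + α) - (1 + 1 / α) * f₂ x ^ α * f₁ x + (1 / α) * f₁ x ^ (1 + α)) ∂μ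
          = 0) := by
  constructor
  · exact integral_nonneg fun x => ptwise_nonneg α hα (f₁ x) (f₂ x) (hf₁ x) (hf₂ x)
  · intro h
    rw [show (0:ℝ) = ∫ _ : X, (0:ℝ) ∂μ from (integral_zero X ℝ).symm]
    apply integral_congr_ae
    filter_upwards [h] with x hx
    rw [hx]
    rcases eq_or_lt_of_le (hf₂ x) with hb | hb
    · rw [← hb, Real.zero_rpow (by positivity), Real.zero_rpow (ne_of_gt hα)]
      ring
    · rw [show f₂ x ^ (1+α) = f₂ x ^ α * f₂ x by
        rw [← Real.rpow_add_one (ne_of_gt hb)]; ring_nf]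
      ring
end

section
/- Let Q : ℝᵖ → ℝ be twice continuously differentiable with a critical point θ̂ (∇Q(θ̂) = 0), and suppose −∇²Q(θ̂) is positive definite with smallest eigenvalue λ > 0. If additionally the third derivatives of Q are bounded by M on the ball B(θ̂, δ) and δ < 3λ/(2M p^{3/2}), then for all θ ∈ B(θ̂, δ), Q(θ) − Q(θ̂) ≤ −(λ/4)‖θ − θ̂‖². -/
open Metric Finset

section aux

variable {E : Type*} [NormedAddCommGroup E] [NormedSpace ℝ E]

lemma iter3_apply (f : E → ℝ) (x : E) (m : Fin 3 → E) :
    iteratedFDeriv ℝ 3 f x m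
      = fderiv ℝ (fderiv ℝ (fderiv ℝ f)) x (m 0) (m 1) (m 2) := by
  rw [iteratedFDeriv_succ_apply_right, iteratedFDeriv_two_apply]
  rfl

lemma sum_abs_le_sqrt {p : ℕ} (v : EuclideanSpace ℝ (Fin p)) :
    ∑ j, |v j| ≤ Real.sqrt p * ‖v‖ := by
  have h1 : (∑ j, |v j|) ^ 2 ≤ (p : ℝ) * ∑ j, |v j| ^ 2 := by
    simpa using sq_sum_le_card_mul_sum_sq (s := (Finset.univ : Finset (Fin p)))
      (f := fun j => |v j|)
  have h2 : ‖v‖ = Real.sqrt (∑ j, |v j| ^ 2) := by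
    simp [EuclideanSpace.norm_eq, Real.norm_eq_abs]
  have h3 : (0 : ℝ) ≤ ∑ j, |v j| := Finset.sum_nonneg fun j _ => abs_nonneg _
  have h4 : (0 : ℝ) ≤ ∑ j, |v j| ^ 2 := Finset.sum_nonneg fun j _ => sq_nonneg _
  calc ∑ j, |v j| = Real.sqrt ((∑ j, |v j|) ^ 2) := (Real.sqrt_sq h3).symm
    _ ≤ Real.sqrt ((p : ℝ) * ∑ j, |v j| ^ 2) := Real.sqrt_le_sqrt h1
    _ = Real.sqrt p * Real.sqrt (∑ j, |v j| ^ 2) := Real.sqrt_mul (by positivity) _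
    _ = Real.sqrt p * ‖v‖ := by rw [h2]

lemma tri_bound {p : ℕ}
    (T : EuclideanSpace ℝ (Fin p) →L[ℝ] EuclideanSpace ℝ (Fin p) →L[ℝ]
      EuclideanSpace ℝ (Fin p) →L[ℝ] ℝ) {C : ℝ} (hC : 0 ≤ C)
    (h : ∀ j k l : Fin p, |T (EuclideanSpace.single j (1:ℝ))
      (EuclideanSpace.single k (1:ℝ)) (EuclideanSpace.single l (1:ℝ))| ≤ C)
    (v : EuclideanSpace ℝ (Fin p)) :
    |T v v v| ≤ C * (∑ j, |v j|) ^ 3 := by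
  set e : Fin p → EuclideanSpace ℝ (Fin p) := fun j => EuclideanSpace.single j (1:ℝ) with he
  have hv : (∑ j, v j • e j) = v := by
    have := (EuclideanSpace.basisFun (Fin p) ℝ).sum_repr v
    simpa [EuclideanSpace.basisFun_apply, EuclideanSpace.basisFun_repr, he] using this
  have expand : T v v v
      = ∑ j, ∑ k, ∑ l, v j * (v k * (v l * T (e l) (e k) (e j))) := by
    conv_lhs => rw [← hv]
    rw [map_sum]
    simp only [ContinuousLinearMap.coe_sum', Finset.sum_apply, map_smulₛₗ, RingHom.id_apply,
      ContinuousLinearMap.smul_apply, map_sum, ContinuousLinearMap.sum_apply, map_smul,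
      smul_eq_mul, Finset.mul_sum]
  rw [expand]
  calc |∑ j, ∑ k, ∑ l, v j * (v k * (v l * T (e l) (e k) (e j)))|
      ≤ ∑ j, ∑ k, ∑ l, |v j| * (|v k| * (|v l| * C)) := by
        refine (Finset.abs_sum_le_sum_abs _ _).trans (Finset.sum_le_sum fun j _ => ?_)
        refine (Finset.abs_sum_le_sum_abs _ _).trans (Finset.sum_le_sum fun k _ => ?_)
        refine (Finset.abs_sum_le_sum_abs _ _).trans (Finset.sum_le_sum fun l _ => ?_)
        rw [abs_mul, abs_mul, abs_mul]
        gcongr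
        exact h l k j
    _ = C * (∑ j, |v j|) ^ 3 := by
        have hcube : C * (∑ j, |v j|) ^ 3
            = C * ((∑ j, |v j|) * ((∑ j, |v j|) * (∑ j, |v j|))) := by ring
        rw [hcube]
        simp only [Finset.mul_sum, Finset.sum_mul]
        exact Finset.sum_congr rfl fun j _ => Finset.sum_congr rfl fun k _ =>
          Finset.sum_congr rfl fun l _ => by ring

lemma rpow_three_halves (p : ℕ) : (p : ℝ) ^ ((3:ℝ)/2) = Real.sqrt p ^ 3 := by
  rw [Real.sqrt_eq_rpow, ← Real.rpow_natCast ((p:ℝ) ^ ((1:ℝ)/2)) 3,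
    ← Real.rpow_mul (by positivity)]
  norm_num

end aux

set_option maxHeartbeats 1000000 in
/-- Local quadratic domination: if `Q` is `C³` near a critical point `θ̂`, the negative
Hessian at `θ̂` has smallest eigenvalue `≥ λ > 0`, the third partial derivatives are
bounded by `M` on `B(θ̂,δ)`, and `δ < 3λ/(2Mp^{3/2})`, then
`Q(θ) − Q(θ̂) ≤ −(λ/4)‖θ−θ̂‖²` on `B(θ̂,δ)`. -/
theorem stmt_19 (p : ℕ) (Q : EuclideanSpace ℝ (Fin p) → ℝ)
    (θhat : EuclideanSpace ℝ (Fin p)) (lam M δ : ℝ)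
    (hlam : 0 < lam) (hM : 0 < M) (hδ0 : 0 < δ)
    (hQ : ContDiffOn ℝ 3 Q (Metric.ball θhat δ))
    (hcrit : fderiv ℝ Q θhat = 0)
    (hHess : ∀ v : EuclideanSpace ℝ (Fin p),
      lam * ‖v‖ ^ 2 ≤ -(iteratedFDeriv ℝ 2 Q θhat ![v, v]))
    (hthird : ∀ θ ∈ Metric.ball θhat δ, ∀ j k l : Fin p,
      |iteratedFDeriv ℝ 3 Q θ
        ![EuclideanSpace.single j (1 : ℝ), EuclideanSpace.single k (1 : ℝ),
          EuclideanSpace.single l (1 : ℝ)]| ≤ M)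
    (hδ : δ < 3 * lam / (2 * M * (p : ℝ) ^ ((3 : ℝ) / 2))) :
    ∀ θ ∈ Metric.ball θhat δ, Q θ - Q θhat ≤ -(lam / 4) * ‖θ - θhat‖ ^ 2 := by
  intro θ hθ
  -- notation
  set v : EuclideanSpace ℝ (Fin p) := θ - θhat with hv
  set r : ℝ := ‖v‖ with hrdef
  have hr0 : 0 ≤ r := norm_nonneg _
  have hrδ : r < δ := by
    have := Metric.mem_ball.1 hθ
    rwa [dist_eq_norm] at this
  set s : ℝ := Real.sqrt p ^ 3 with hs
  have hs0 : 0 ≤ s := by positivity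
  -- dispose of the degenerate case p = 0
  have hMsδ : M * s * δ < 3 * lam / 2 := by
    rcases Nat.eq_zero_or_pos p with hp | hp
    · exfalso
      rw [hp] at hδ
      simp only [Nat.cast_zero, Real.zero_rpow (by norm_num : ((3:ℝ)/2) ≠ 0), mul_zero,
        div_zero] at hδ
      linarith
    · have hsp : 0 < s := by
        have : 0 < Real.sqrt p := Real.sqrt_pos.2 (by exact_mod_cast hp)
        positivity
      rw [rpow_three_halves] at hδ
      have h2 : 0 < 2 * M * s := by positivity
      rw [lt_div_iff₀ h2] at hδ
      nlinarith
  -- the line segment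
  set L : ℝ → EuclideanSpace ℝ (Fin p) := fun t => θhat + t • v with hL
  have hmemL : ∀ t ∈ Set.Icc (0:ℝ) 1, L t ∈ Metric.ball θhat δ := by
    intro t ht
    rw [Metric.mem_ball, dist_eq_norm]
    have h0 : L t - θhat = t • v := by simp [hL]
    rw [h0, norm_smul, Real.norm_eq_abs]
    have h1 : |t| ≤ 1 := abs_le.2 ⟨by linarith [ht.1], ht.2⟩
    calc |t| * r ≤ 1 * r := by gcongr
      _ = r := one_mul r
      _ < δ := hrδ
  have hLd : ∀ t, HasDerivAt L v t := by
    intro t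
    have : HasDerivAt (fun u : ℝ => u • v) ((1:ℝ) • v) t := (hasDerivAt_id t).smul_const v
    exact (by simpa using this : HasDerivAt (fun u : ℝ => u • v) v t).const_add θhat
  -- derivatives of Q
  set D1 := fderiv ℝ Q with hD1def
  set D2 := fderiv ℝ D1 with hD2def
  set D3 := fderiv ℝ D2 with hD3def
  have hCAt : ∀ x ∈ Metric.ball θhat δ, ContDiffAt ℝ 3 Q x := fun x hx =>
    hQ.contDiffAt (isOpen_ball.mem_nhds hx)
  have hfd1 : ∀ x ∈ Metric.ball θhat δ, HasFDerivAt Q (D1 x) x := fun x hx =>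
    ((hCAt x hx).differentiableAt (by norm_num)).hasFDerivAt
  have hC2 : ∀ x ∈ Metric.ball θhat δ, ContDiffAt ℝ 2 D1 x := fun x hx =>
    (hCAt x hx).fderiv_right (by norm_num)
  have hfd2 : ∀ x ∈ Metric.ball θhat δ, HasFDerivAt D1 (D2 x) x := fun x hx =>
    ((hC2 x hx).differentiableAt (by norm_num)).hasFDerivAt
  have hC3 : ∀ x ∈ Metric.ball θhat δ, ContDiffAt ℝ 1 D2 x := fun x hx =>
    (hC2 x hx).fderiv_right (by norm_num)
  have hfd3 : ∀ x ∈ Metric.ball θhat δ, HasFDerivAt D2 (D3 x) x := fun x hx =>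
    ((hC3 x hx).differentiableAt (by norm_num)).hasFDerivAt
  -- scalar functions along the segment
  set g : ℝ → ℝ := fun t => Q (L t) with hgdef
  set g1 : ℝ → ℝ := fun t => D1 (L t) v with hg1def
  set g2 : ℝ → ℝ := fun t => D2 (L t) v v with hg2def
  set g3 : ℝ → ℝ := fun t => D3 (L t) v v v with hg3def
  have hg : ∀ t ∈ Set.Icc (0:ℝ) 1, HasDerivAt g (g1 t) t := fun t ht =>
    (hfd1 _ (hmemL t ht)).comp_hasDerivAt t (hLd t)
  have hg1 : ∀ t ∈ Set.Icc (0:ℝ) 1, HasDerivAt g1 (g2 t) t := by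
    intro t ht
    have h := (hfd2 _ (hmemL t ht)).comp_hasDerivAt t (hLd t)
    have := h.clm_apply (hasDerivAt_const t v)
    simpa using this
  have hg2' : ∀ t ∈ Set.Icc (0:ℝ) 1, HasDerivAt g2 (g3 t) t := by
    intro t ht
    have h := HasFDerivAt.comp_hasDerivAt (𝕜 := ℝ) (F := EuclideanSpace ℝ (Fin p))
      (E := EuclideanSpace ℝ (Fin p) →L[ℝ] EuclideanSpace ℝ (Fin p) →L[ℝ] ℝ) t (hfd3 _ (hmemL t ht)) (hLd t)
    have h' := h.clm_apply (hasDerivAt_const t v)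
    have h'' := h'.clm_apply (hasDerivAt_const t v)
    simpa using h''
  -- bound on g3
  set K : ℝ := M * s * r ^ 3 with hK
  have hK0 : 0 ≤ K := by positivity
  have hg3bound : ∀ t ∈ Set.Icc (0:ℝ) 1, |g3 t| ≤ K := by
    intro t ht
    have hx := hmemL t ht
    have hb : ∀ j k l : Fin p, |D3 (L t) (EuclideanSpace.single j (1:ℝ))
        (EuclideanSpace.single k (1:ℝ)) (EuclideanSpace.single l (1:ℝ))| ≤ M := by
      intro j k l
      have := hthird (L t) hx j k l
      rwa [iter3_apply] at this
    have h1 : |g3 t| ≤ M * (∑ j, |v j|) ^ 3 := tri_bound (D3 (L t)) hM.le hb v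
    have h2 : (∑ j, |v j|) ≤ Real.sqrt p * r := sum_abs_le_sqrt v
    have h3 : (0:ℝ) ≤ ∑ j, |v j| := Finset.sum_nonneg fun j _ => abs_nonneg _
    calc |g3 t| ≤ M * (∑ j, |v j|) ^ 3 := h1
      _ ≤ M * (Real.sqrt p * r) ^ 3 := by gcongr
      _ = K := by rw [hK, hs, mul_pow]; ring
  -- Step A : g2 t ≤ g2 0 + K * t on [0,1]
  have stepA : ∀ t ∈ Set.Icc (0:ℝ) 1, g2 t ≤ g2 0 + K * t := by
    have hmv := norm_image_sub_le_of_norm_deriv_le_segment' (a := 0) (b := 1)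
      (f := g2) (f' := g3) (C := K)
      (fun x hx => (hg2' x hx).hasDerivWithinAt)
      (fun x hx => by simpa [Real.norm_eq_abs] using hg3bound x (Set.Ico_subset_Icc_self hx))
    intro t ht
    have := hmv t ht
    rw [Real.norm_eq_abs] at this
    have h2 := le_of_abs_le this
    linarith
  -- Step B : antitone auxiliary : g1 t ≤ g1 0 + g2 0 * t + K/2 * t^2
  have stepB : ∀ t ∈ Set.Icc (0:ℝ) 1, g1 t ≤ g1 0 + g2 0 * t + K/2 * t^2 := by
    set u : ℝ → ℝ := fun t => g1 t - g2 0 * t - K/2 * t^2 with hu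
    have hu' : ∀ t ∈ Set.Icc (0:ℝ) 1, HasDerivAt u (g2 t - g2 0 - K * t) t := by
      intro t ht
      have h1 : HasDerivAt (fun t : ℝ => g2 0 * t) (g2 0) t := by
        simpa using (hasDerivAt_id t).const_mul (g2 0)
      have h2 : HasDerivAt (fun t : ℝ => K/2 * t^2) (K/2 * (2 * t)) t := by
        simpa using (hasDerivAt_pow 2 t).const_mul (K/2)
      have := ((hg1 t ht).sub h1).sub h2
      exact this.congr_deriv (by ring)
    have hmono : AntitoneOn u (Set.Icc (0:ℝ) 1) := by
      apply antitoneOn_of_deriv_nonpos (convex_Icc 0 1)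
      · exact fun t ht => (hu' t ht).continuousAt.continuousWithinAt
      · intro t ht
        rw [interior_Icc] at ht
        exact (hu' t (Set.mem_Icc_of_Ioo ht)).differentiableAt.differentiableWithinAt
      · intro t ht
        rw [interior_Icc] at ht
        rw [(hu' t (Set.mem_Icc_of_Ioo ht)).deriv]
        have := stepA t (Set.mem_Icc_of_Ioo ht)
        linarith
    intro t ht
    have := hmono (Set.left_mem_Icc.2 zero_le_one) ht ht.1
    simp only [hu] at this
    nlinarith [this]
  -- Step C
  have stepC : g 1 ≤ g 0 + g1 0 + g2 0 / 2 + K / 6 := by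
    set w : ℝ → ℝ := fun t => g t - g1 0 * t - g2 0/2 * t^2 - K/6 * t^3 with hw
    have hw' : ∀ t ∈ Set.Icc (0:ℝ) 1,
        HasDerivAt w (g1 t - g1 0 - g2 0 * t - K/2 * t^2) t := by
      intro t ht
      have h1 : HasDerivAt (fun t : ℝ => g1 0 * t) (g1 0) t := by
        simpa using (hasDerivAt_id t).const_mul (g1 0)
      have h2 : HasDerivAt (fun t : ℝ => g2 0/2 * t^2) (g2 0/2 * (2 * t)) t := by
        simpa using (hasDerivAt_pow 2 t).const_mul (g2 0 / 2)
      have h3 : HasDerivAt (fun t : ℝ => K/6 * t^3) (K/6 * (3 * t^2)) t := by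
        simpa using (hasDerivAt_pow 3 t).const_mul (K/6)
      have := (((hg t ht).sub h1).sub h2).sub h3
      exact this.congr_deriv (by ring)
    have hmono : AntitoneOn w (Set.Icc (0:ℝ) 1) := by
      apply antitoneOn_of_deriv_nonpos (convex_Icc 0 1)
      · exact fun t ht => (hw' t ht).continuousAt.continuousWithinAt
      · intro t ht
        rw [interior_Icc] at ht
        exact (hw' t (Set.mem_Icc_of_Ioo ht)).differentiableAt.differentiableWithinAt
      · intro t ht
        rw [interior_Icc] at ht
        rw [(hw' t (Set.mem_Icc_of_Ioo ht)).deriv]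
        have := stepB t (Set.mem_Icc_of_Ioo ht)
        linarith
    have := hmono (Set.left_mem_Icc.2 zero_le_one) (Set.right_mem_Icc.2 zero_le_one)
      zero_le_one
    simp only [hw] at this
    nlinarith [this]
  -- evaluate at the endpoints
  have hL0 : L 0 = θhat := by simp [hL]
  have hL1 : L 1 = θ := by simp [hL, hv]
  have hg10 : g1 0 = 0 := by
    simp only [hg1def, hL0, hcrit, ContinuousLinearMap.zero_apply]
  have hg20 : g2 0 ≤ -(lam * r ^ 2) := by
    have h1 := hHess v
    have h2 : iteratedFDeriv ℝ 2 Q θhat ![v, v] = D2 θhat v v := by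
      rw [iteratedFDeriv_two_apply]
      simp [hD2def, hD1def]
    rw [h2] at h1
    simp only [hg2def, hL0]
    linarith
  have hfinal : Q θ - Q θhat ≤ -(lam * r ^ 2) / 2 + K / 6 := by
    have hQθ : g 1 = Q θ := by rw [hgdef]; simp [hL1]
    have hQθhat : g 0 = Q θhat := by rw [hgdef]; simp [hL0]
    rw [← hQθ, ← hQθhat]
    linarith [stepC]
  -- conclude
  have hKbound : K ≤ 3 * lam / 2 * r ^ 2 := by
    have h1 : M * s * r ≤ M * s * δ := by
      have : 0 ≤ M * s := by positivity
      exact mul_le_mul_of_nonneg_left hrδ.le this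
    have h2 : M * s * r ≤ 3 * lam / 2 := le_trans h1 hMsδ.le
    calc K = (M * s * r) * r ^ 2 := by rw [hK]; ring
      _ ≤ 3 * lam / 2 * r ^ 2 := by
        have := sq_nonneg r
        apply mul_le_mul_of_nonneg_right h2 (by positivity)
  show Q θ - Q θhat ≤ -(lam / 4) * r ^ 2
  linarith
end
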